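/- Let s ≥ 2 and k ≥ 1 be integers, let θ be a bijection of the k-blocks (Fin k → Fin s), and let F : ℝ → ℝ satisfy: for every admissible digit sequence a, F(∑_{n=0}^∞ a n / s^{n+1}) = ∑_{n=0}^∞ (Θ a) n / s^{n+1}. Then the graph of F over [0,1), i.e. the set { p : ℝ × ℝ | ∃ x ∈ [0,1), p = (x, F x) }, has Hausdorff dimension equal to 1. (Paper's Theorem 3 for functions of type f^s_k.) -/

import Mathlib

open scoped ENNReal
namespace Stmt17Aux


noncomputable def dig (s : ℕ) (x : ℝ) (n : ℕ) : ℤ :=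
  ⌊(s : ℝ) ^ (n + 1) * x⌋ - s * ⌊(s : ℝ) ^ n * x⌋

variable {s : ℕ} (hs : 2 ≤ s)

lemma dig_nonneg (x : ℝ) (n : ℕ) : 0 ≤ dig s x n := by
  have h1 : ((s : ℤ) * ⌊(s : ℝ) ^ n * x⌋ : ℤ) ≤ ⌊(s : ℝ) ^ (n + 1) * x⌋ := by
    rw [Int.le_floor]
    push_cast
    have : ((s:ℝ)) * (⌊(s : ℝ) ^ n * x⌋ : ℝ) ≤ (s:ℝ) * ((s:ℝ)^n * x) := by
      have := Int.floor_le ((s : ℝ) ^ n * x)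
      have hs0 : (0:ℝ) ≤ s := by positivity
      nlinarith [Int.floor_le ((s : ℝ) ^ n * x)]
    calc ((s:ℝ)) * (⌊(s : ℝ) ^ n * x⌋ : ℝ) ≤ (s:ℝ) * ((s:ℝ)^n * x) := this
      _ = (s:ℝ)^(n+1) * x := by ring
  simpa [dig] using h1

lemma dig_lt (hs : 2 ≤ s) (x : ℝ) (n : ℕ) : dig s x n < s := by
  have hs0 : (0:ℝ) < s := by positivity
  have h1 : ⌊(s : ℝ) ^ (n + 1) * x⌋ < (s : ℤ) * ⌊(s : ℝ) ^ n * x⌋ + s := by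
    rw [Int.floor_lt]
    push_cast
    have h2 : (s:ℝ)^n * x < ⌊(s : ℝ) ^ n * x⌋ + 1 := Int.lt_floor_add_one _
    calc (s:ℝ)^(n+1) * x = (s:ℝ) * ((s:ℝ)^n * x) := by ring
      _ < (s:ℝ) * ((⌊(s : ℝ) ^ n * x⌋ : ℝ) + 1) := by nlinarith
      _ = (s:ℝ) * (⌊(s : ℝ) ^ n * x⌋:ℝ) + s := by ring
  simp only [dig]
  omega

lemma dig_cast (x : ℝ) (n : ℕ) :
    ((dig s x n : ℤ) : ℝ) = (⌊(s : ℝ) ^ (n + 1) * x⌋ : ℝ) - s * (⌊(s : ℝ) ^ n * x⌋ : ℝ) := by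
  unfold dig
  push_cast
  ring

lemma sum_dig (hs : 2 ≤ s) (x : ℝ) (N : ℕ) :
    ∑ n ∈ Finset.range N, ((dig s x n : ℤ) : ℝ) / (s : ℝ) ^ (n + 1)
      = (⌊(s : ℝ) ^ N * x⌋ : ℝ) / (s : ℝ) ^ N - (⌊x⌋ : ℝ) := by
  have hs0 : (0:ℝ) < s := by positivity
  induction N with
  | zero => simp
  | succ N ih =>
    rw [Finset.sum_range_succ, ih, dig_cast]
    have hsN : ((s:ℝ))^N ≠ 0 := by positivity
    have hsN1 : ((s:ℝ))^(N+1) ≠ 0 := by positivity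
    field_simp
    ring



variable {s : ℕ}

lemma s_real_pos (hs : 2 ≤ s) : (0:ℝ) < s := by positivity

lemma inv_s_lt_one (hs : 2 ≤ s) : (1:ℝ)/s < 1 := by
  rw [div_lt_one (by positivity)]
  exact_mod_cast Nat.lt_of_lt_of_le Nat.one_lt_two hs

lemma summable_digitSeries (hs : 2 ≤ s) (u : ℕ → ℕ) (hu : ∀ n, u n < s) :
    Summable (fun n => ((u n : ℕ) : ℝ) / (s : ℝ) ^ (n + 1)) := by
  have hs0 : (0:ℝ) < s := by positivity
  refine Summable.of_nonneg_of_le (fun n => by positivity) (fun n => ?_)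
    (summable_geometric_of_lt_one (r := 1/s) (by positivity) (inv_s_lt_one hs))
  have h1 : ((u n : ℕ) : ℝ) ≤ s := by exact_mod_cast (hu n).le
  have h2 : ((u n : ℕ) : ℝ) / (s : ℝ) ^ (n + 1) ≤ (s:ℝ) / (s:ℝ)^(n+1) := by
    apply div_le_div_of_nonneg_right h1 (by positivity) |>.trans_eq rfl
  rw [div_pow, one_pow]
  calc ((u n : ℕ) : ℝ) / (s : ℝ) ^ (n + 1) ≤ (s:ℝ) / (s:ℝ)^(n+1) := h2
    _ = 1 / (s:ℝ)^n := by rw [pow_succ]; field_simp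

lemma tsum_sub_one_div_pow (hs : 2 ≤ s) (M : ℕ) :
    ∑' n : ℕ, ((s:ℝ) - 1) / (s : ℝ) ^ (n + M + 1) = ((1:ℝ)/s) ^ M := by
  have hs0 : (0:ℝ) < s := by positivity
  have hs1 : (1:ℝ) < s := by exact_mod_cast Nat.lt_of_lt_of_le Nat.one_lt_two hs
  have key : ∀ n : ℕ, ((s:ℝ) - 1) / (s : ℝ) ^ (n + M + 1)
      = (((s:ℝ) - 1) / (s : ℝ) ^ (M + 1)) * ((1:ℝ)/s)^n := by
    intro n
    rw [div_pow, one_pow, div_mul_div_comm, mul_one]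
    congr 1
    rw [← pow_add]
    ring_nf
  simp_rw [key]
  rw [tsum_mul_left, tsum_geometric_of_lt_one (by positivity) (inv_s_lt_one hs)]
  have h2 : (1:ℝ) - 1/s = ((s:ℝ)-1)/s := by field_simp
  rw [h2, div_pow, one_pow]
  have hsm1 : (s:ℝ) - 1 ≠ 0 := by linarith
  field_simp
  rw [pow_succ]
  ring


variable {s : ℕ}


lemma summable_geomTail (hs : 2 ≤ s) (M : ℕ) :
    Summable (fun n : ℕ => ((s:ℝ) - 1) / (s : ℝ) ^ (n + M + 1)) := by
  have key : ∀ n : ℕ, ((s:ℝ) - 1) / (s : ℝ) ^ (n + M + 1)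
      = (((s:ℝ) - 1) / (s : ℝ) ^ (M + 1)) * ((1:ℝ)/s)^n := by
    intro n
    rw [div_pow, one_pow, div_mul_div_comm, mul_one]
    congr 1
    rw [← pow_add]; ring_nf
  simp_rw [key]
  exact (summable_geometric_of_lt_one (by positivity) (inv_s_lt_one hs)).mul_left _

-- tail of a digit series is between 0 and (1/s)^M
lemma tail_nonneg (u : ℕ → ℕ) (M : ℕ) (hs : 2 ≤ s) :
    0 ≤ ∑' n : ℕ, ((u (n + M) : ℕ) : ℝ) / (s : ℝ) ^ (n + M + 1) :=
  tsum_nonneg (fun n => by positivity)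

lemma tail_le (hs : 2 ≤ s) (u : ℕ → ℕ) (hu : ∀ n, u n < s) (M : ℕ) :
    ∑' n : ℕ, ((u (n + M) : ℕ) : ℝ) / (s : ℝ) ^ (n + M + 1) ≤ ((1:ℝ)/s) ^ M := by
  rw [← tsum_sub_one_div_pow hs M]
  have hsum : Summable (fun n => ((u n : ℕ) : ℝ) / (s : ℝ) ^ (n + 1)) :=
    summable_digitSeries hs u hu
  have hsum' : Summable (fun n : ℕ => ((u (n + M) : ℕ) : ℝ) / (s : ℝ) ^ (n + M + 1)) := by
    have := (summable_nat_add_iff M).2 hsum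
    simpa using this
  refine Summable.tsum_le_tsum (fun n => ?_) hsum' (summable_geomTail hs M)
  have h1 : ((u (n+M) : ℕ) : ℝ) ≤ (s:ℝ) - 1 := by
    have := hu (n+M)
    have : u (n+M) ≤ s - 1 := by omega
    have h2 : ((u (n+M) : ℕ) : ℝ) ≤ ((s - 1 : ℕ) : ℝ) := by exact_mod_cast this
    rwa [Nat.cast_sub (by omega), Nat.cast_one] at h2
  exact div_le_div_of_nonneg_right h1 (by positivity) |>.trans_eq rfl

-- two digit series agreeing on a prefix are close
lemma abs_tsum_sub_le (hs : 2 ≤ s) (u v : ℕ → ℕ) (hu : ∀ n, u n < s) (hv : ∀ n, v n < s)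
    (M : ℕ) (h : ∀ n < M, u n = v n) :
    |(∑' n : ℕ, ((u n : ℕ) : ℝ) / (s : ℝ) ^ (n + 1))
      - ∑' n : ℕ, ((v n : ℕ) : ℝ) / (s : ℝ) ^ (n + 1)| ≤ ((1:ℝ)/s) ^ M := by
  have hsu : Summable (fun n => ((u n : ℕ) : ℝ) / (s : ℝ) ^ (n + 1)) :=
    summable_digitSeries hs u hu
  have hsv : Summable (fun n => ((v n : ℕ) : ℝ) / (s : ℝ) ^ (n + 1)) :=
    summable_digitSeries hs v hv
  have hU := (Summable.sum_add_tsum_nat_add (f := fun n => ((u n : ℕ) : ℝ) / (s : ℝ) ^ (n + 1)) M hsu).symm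
  have hV := (Summable.sum_add_tsum_nat_add (f := fun n => ((v n : ℕ) : ℝ) / (s : ℝ) ^ (n + 1)) M hsv).symm
  have hpre : ∑ n ∈ Finset.range M, ((u n : ℕ) : ℝ) / (s : ℝ) ^ (n + 1)
      = ∑ n ∈ Finset.range M, ((v n : ℕ) : ℝ) / (s : ℝ) ^ (n + 1) := by
    refine Finset.sum_congr rfl (fun n hn => ?_)
    rw [h n (Finset.mem_range.1 hn)]
  have tu0 := tail_nonneg (s := s) u M hs
  have tv0 := tail_nonneg (s := s) v M hs
  have tuM := tail_le hs u hu M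
  have tvM := tail_le hs v hv M
  rw [hU, hV, hpre]
  have : ∀ A B C : ℝ, |(C + A) - (C + B)| = |A - B| := by intro A B C; congr 1; ring
  rw [this]
  rw [abs_le]
  constructor <;> nlinarith [tu0, tv0, tuM, tvM]
lemma digNat_lt (hs : 2 ≤ s) (x : ℝ) (n : ℕ) : (dig s x n).toNat < s := by
  have h1 := dig_lt hs x n
  have h2 := dig_nonneg (s := s) x n
  omega

lemma digNat_cast (x : ℝ) (n : ℕ) :
    (((dig s x n).toNat : ℕ) : ℝ) = ((dig s x n : ℤ) : ℝ) := by
  exact_mod_cast congrArg (fun z : ℤ => (z:ℝ)) (Int.toNat_of_nonneg (dig_nonneg (s := s) x n))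

lemma hasSum_dig (hs : 2 ≤ s) {x : ℝ} (hx : x ∈ Set.Ico (0:ℝ) 1) :
    HasSum (fun n => (((dig s x n).toNat : ℕ) : ℝ) / (s : ℝ) ^ (n + 1)) x := by
  have hs0 : (0:ℝ) < s := by positivity
  have hfl : ⌊x⌋ = 0 := Int.floor_eq_zero_iff.2 (by exact ⟨hx.1, hx.2⟩)
  rw [hasSum_iff_tendsto_nat_of_nonneg (fun n => by positivity)]
  have heq : ∀ N : ℕ, ∑ n ∈ Finset.range N, (((dig s x n).toNat : ℕ) : ℝ) / (s : ℝ) ^ (n + 1)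
      = (⌊(s : ℝ) ^ N * x⌋ : ℝ) / (s : ℝ) ^ N := by
    intro N
    simp_rw [digNat_cast]
    rw [sum_dig hs, hfl]
    simp
  simp_rw [heq]
  have hlow : ∀ N : ℕ, x - ((1:ℝ)/s)^N ≤ (⌊(s : ℝ) ^ N * x⌋ : ℝ) / (s : ℝ) ^ N := by
    intro N
    have hpN : (0:ℝ) < (s:ℝ)^N := by positivity
    have h1 : (s:ℝ)^N * x - 1 < (⌊(s : ℝ) ^ N * x⌋ : ℝ) := by
      linarith [Int.lt_floor_add_one ((s:ℝ)^N * x)]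
    rw [div_pow, one_pow, sub_le_iff_le_add, ← add_div, le_div_iff₀ hpN]
    linarith
  have hup : ∀ N : ℕ, (⌊(s : ℝ) ^ N * x⌋ : ℝ) / (s : ℝ) ^ N ≤ x := by
    intro N
    have hpN : (0:ℝ) < (s:ℝ)^N := by positivity
    rw [div_le_iff₀ hpN]
    calc (⌊(s : ℝ) ^ N * x⌋ : ℝ) ≤ (s:ℝ)^N * x := Int.floor_le _
      _ = x * (s:ℝ)^N := by ring
  refine tendsto_of_tendsto_of_tendsto_of_le_of_le ?_ tendsto_const_nhds hlow hup
  have : Filter.Tendsto (fun N : ℕ => ((1:ℝ)/s)^N) Filter.atTop (nhds 0) :=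
    tendsto_pow_atTop_nhds_zero_of_lt_one (by positivity) (inv_s_lt_one hs)
  simpa using tendsto_const_nhds.sub this

lemma not_eventually_dig (hs : 2 ≤ s) {x : ℝ} (hx : x ∈ Set.Ico (0:ℝ) 1) :
    ¬ ∃ N, ∀ n ≥ N, (dig s x n).toNat = s - 1 := by
  rintro ⟨N, hN⟩
  have hs0 : (0:ℝ) < s := by positivity
  have hsum : Summable (fun n => (((dig s x n).toNat : ℕ) : ℝ) / (s : ℝ) ^ (n + 1)) :=
    summable_digitSeries hs _ (digNat_lt hs x)
  have hx' := (hasSum_dig hs hx).tsum_eq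
  have hsplit := Summable.sum_add_tsum_nat_add
    (f := fun n => (((dig s x n).toNat : ℕ) : ℝ) / (s : ℝ) ^ (n + 1)) N hsum
  rw [hx'] at hsplit
  have hfl : ⌊x⌋ = 0 := Int.floor_eq_zero_iff.2 (by exact ⟨hx.1, hx.2⟩)
  have hpre : ∑ n ∈ Finset.range N, (((dig s x n).toNat : ℕ) : ℝ) / (s : ℝ) ^ (n + 1)
      = (⌊(s : ℝ) ^ N * x⌋ : ℝ) / (s : ℝ) ^ N := by
    simp_rw [digNat_cast]
    rw [sum_dig hs, hfl]
    simp
  have htail : ∑' n : ℕ, (((dig s x (n + N)).toNat : ℕ) : ℝ) / (s : ℝ) ^ (n + N + 1)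
      = ((1:ℝ)/s) ^ N := by
    rw [← tsum_sub_one_div_pow hs N]
    congr 1
    funext n
    congr 1
    have h1 : ((dig s x (n + N)).toNat : ℕ) = s - 1 := hN (n + N) (by omega)
    rw [h1, Nat.cast_sub (by omega), Nat.cast_one]
  rw [hpre, htail] at hsplit
  have h2 : (s:ℝ)^N * x = (⌊(s : ℝ) ^ N * x⌋ : ℝ) + 1 := by
    have hpN : (0:ℝ) < (s:ℝ)^N := by positivity
    have h3 : ((1:ℝ)/s)^N = 1/(s:ℝ)^N := by rw [div_pow, one_pow]
    rw [h3] at hsplit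
    field_simp at hsplit
    nlinarith [hsplit]
  linarith [Int.lt_floor_add_one ((s:ℝ)^N * x)]

lemma floor_le_floor_of_floor_pow_eq (hs : 2 ≤ s) {u v : ℝ} (t : ℕ)
    (h : ⌊(s:ℝ)^t * u⌋ = ⌊(s:ℝ)^t * v⌋) : ⌊u⌋ ≤ ⌊v⌋ := by
  by_contra hlt
  push_neg at hlt
  have hs0 : (0:ℝ) < (s:ℝ)^t := by positivity
  have h1 : v < (⌊u⌋ : ℝ) := by
    have := Int.lt_floor_add_one v
    have h2 : (⌊v⌋ : ℝ) + 1 ≤ (⌊u⌋ : ℝ) := by exact_mod_cast hlt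
    linarith
  have h2 : (s:ℝ)^t * v < (s:ℝ)^t * (⌊u⌋ : ℝ) := by nlinarith
  have h3 : (s:ℝ)^t * (⌊u⌋ : ℝ) ≤ (s:ℝ)^t * u := by nlinarith [Int.floor_le u]
  have h4 : ⌊(s:ℝ)^t * v⌋ < ((s:ℤ)^t * ⌊u⌋ : ℤ) := by
    rw [Int.floor_lt]
    push_cast
    exact h2
  have h5 : ((s:ℤ)^t * ⌊u⌋ : ℤ) ≤ ⌊(s:ℝ)^t * u⌋ := by
    rw [Int.le_floor]
    push_cast
    exact h3
  omega

lemma floor_eq_of_floor_pow_eq (hs : 2 ≤ s) {u v : ℝ} (t : ℕ)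
    (h : ⌊(s:ℝ)^t * u⌋ = ⌊(s:ℝ)^t * v⌋) : ⌊u⌋ = ⌊v⌋ :=
  le_antisymm (floor_le_floor_of_floor_pow_eq hs t h)
    (floor_le_floor_of_floor_pow_eq hs t h.symm)

lemma dig_eq_of_floor_eq (hs : 2 ≤ s) {x y : ℝ} (M : ℕ)
    (h : ⌊(s:ℝ)^M * x⌋ = ⌊(s:ℝ)^M * y⌋) : ∀ n < M, dig s x n = dig s y n := by
  have key : ∀ n ≤ M, ⌊(s:ℝ)^n * x⌋ = ⌊(s:ℝ)^n * y⌋ := by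
    intro n hn
    have heq : ∀ z : ℝ, (s:ℝ)^(M - n) * ((s:ℝ)^n * z) = (s:ℝ)^M * z := by
      intro z
      rw [← mul_assoc, ← pow_add, Nat.sub_add_cancel hn]
    apply floor_eq_of_floor_pow_eq hs (M - n)
    rw [heq, heq]
    exact h
  intro n hn
  unfold dig
  rw [key n (by omega), key (n+1) (by omega)]


lemma theta_prefix (hk : 1 ≤ k) (θ : (Fin k → Fin s) ≃ (Fin k → Fin s))
    (Θ : (ℕ → Fin s) → (ℕ → Fin s))
    (hΘ : ∀ (a : ℕ → Fin s) (m : ℕ) (i : Fin k),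
      Θ a (k * m + (i : ℕ)) = θ (fun j => a (k * m + (j : ℕ))) i)
    (a b : ℕ → Fin s) (m : ℕ) (h : ∀ n < k * m, a n = b n) :
    ∀ n < k * m, Θ a n = Θ b n := by
  intro n hn
  have hk0 : 0 < k := hk
  have hi : n % k < k := Nat.mod_lt n hk0
  have hq : n / k < m := by
    rw [Nat.div_lt_iff_lt_mul hk0, mul_comm]
    exact hn
  have hrep : n = k * (n / k) + ((⟨n % k, hi⟩ : Fin k) : ℕ) := by
    simp [Nat.div_add_mod]
  have hblock : (fun j : Fin k => a (k * (n / k) + (j : ℕ)))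
      = (fun j : Fin k => b (k * (n / k) + (j : ℕ))) := by
    funext j
    apply h
    have : (j : ℕ) < k := j.2
    calc k * (n / k) + (j : ℕ) < k * (n / k) + k := by omega
      _ = k * (n / k + 1) := by ring
      _ ≤ k * m := by exact Nat.mul_le_mul_left k (by omega)
  rw [hrep, hΘ a (n / k) ⟨n % k, hi⟩, hΘ b (n / k) ⟨n % k, hi⟩, hblock]

lemma key_estimate (hs : 2 ≤ s) {k : ℕ} (hk : 1 ≤ k)
    (θ : (Fin k → Fin s) ≃ (Fin k → Fin s))
    (Θ : (ℕ → Fin s) → (ℕ → Fin s))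
    (hΘ : ∀ (a : ℕ → Fin s) (m : ℕ) (i : Fin k),
      Θ a (k * m + (i : ℕ)) = θ (fun j => a (k * m + (j : ℕ))) i)
    (F : ℝ → ℝ)
    (hF : ∀ a : ℕ → Fin s, (¬ ∃ N, ∀ n ≥ N, (a n : ℕ) = s - 1) →
      F (∑' n : ℕ, ((a n : ℕ) : ℝ) / (s : ℝ) ^ (n + 1)) =
        ∑' n : ℕ, ((Θ a n : ℕ) : ℝ) / (s : ℝ) ^ (n + 1))
    {x y : ℝ} (hx : x ∈ Set.Ico (0:ℝ) 1) (hy : y ∈ Set.Ico (0:ℝ) 1) (m : ℕ)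
    (hfl : ⌊(s:ℝ)^(k*m) * x⌋ = ⌊(s:ℝ)^(k*m) * y⌋) :
    |F x - F y| ≤ ((1:ℝ)/s) ^ (k * m) := by
  set a : ℕ → Fin s := fun n => ⟨(dig s x n).toNat, digNat_lt hs x n⟩ with ha
  set b : ℕ → Fin s := fun n => ⟨(dig s y n).toNat, digNat_lt hs y n⟩ with hb
  have hxa : x = ∑' n : ℕ, ((a n : ℕ) : ℝ) / (s : ℝ) ^ (n + 1) :=
    ((hasSum_dig hs hx).tsum_eq).symm
  have hyb : y = ∑' n : ℕ, ((b n : ℕ) : ℝ) / (s : ℝ) ^ (n + 1) :=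
    ((hasSum_dig hs hy).tsum_eq).symm
  have hFx : F x = ∑' n : ℕ, ((Θ a n : ℕ) : ℝ) / (s : ℝ) ^ (n + 1) := by
    conv_lhs => rw [hxa]
    exact hF a (not_eventually_dig hs hx)
  have hFy : F y = ∑' n : ℕ, ((Θ b n : ℕ) : ℝ) / (s : ℝ) ^ (n + 1) := by
    conv_lhs => rw [hyb]
    exact hF b (not_eventually_dig hs hy)
  rw [hFx, hFy]
  have hab : ∀ n < k * m, a n = b n := by
    intro n hn
    have := dig_eq_of_floor_eq hs (k * m) hfl n hn
    simp only [ha, hb]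
    exact Fin.ext (by simp [this])
  have hTh : ∀ n < k * m, (Θ a n : ℕ) = (Θ b n : ℕ) := by
    intro n hn
    rw [theta_prefix hk θ Θ hΘ a b m hab n hn]
  exact abs_tsum_sub_le hs (fun n => (Θ a n : ℕ)) (fun n => (Θ b n : ℕ))
    (fun n => (Θ a n).2) (fun n => (Θ b n).2) (k * m) hTh

lemma aux_tendsto {B : ℝ} (hB : 1 < B) {d : ℝ} (hd : 1 < d) :
    Filter.Tendsto (fun m : ℕ => B ^ m * (2 * (B⁻¹) ^ m) ^ d) Filter.atTop (nhds 0) := by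
  have hB0 : (0:ℝ) < B := by linarith
  have hinv0 : (0:ℝ) < B⁻¹ := by positivity
  have heq : ∀ m : ℕ, B ^ m * (2 * (B⁻¹) ^ m) ^ d = 2 ^ d * (B * (B⁻¹) ^ d) ^ m := by
    intro m
    rw [Real.mul_rpow (by norm_num) (by positivity)]
    rw [← Real.rpow_natCast B⁻¹ m, ← Real.rpow_mul (by positivity), mul_comm (m:ℝ) d,
      Real.rpow_mul (by positivity), Real.rpow_natCast]
    rw [mul_pow]
    ring
  have hρ0 : (0:ℝ) ≤ B * (B⁻¹) ^ d := by positivity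
  have hρ1 : B * (B⁻¹) ^ d < 1 := by
    have h1 : (B⁻¹) ^ d = B ^ (-d) := by
      rw [Real.inv_rpow (le_of_lt hB0), Real.rpow_neg (le_of_lt hB0)]
    have h2 : B * (B⁻¹) ^ d = B ^ (1 - d) := by
      rw [h1, sub_eq_add_neg, Real.rpow_add hB0, Real.rpow_one]
    rw [h2]
    exact Real.rpow_lt_one_of_one_lt_of_neg hB (by linarith)
  simp_rw [heq]
  simpa using (tendsto_pow_atTop_nhds_zero_of_lt_one hρ0 hρ1).const_mul ((2:ℝ) ^ d)

end Stmt17Aux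

open Stmt17Aux in
/-- Paper's Theorem 3 for functions of type `f^s_k`: the graph of `f^s_k` over
`[0,1)` has Hausdorff dimension `1`. -/
theorem stmt_17 (s k : ℕ) (hs : 2 ≤ s) (hk : 1 ≤ k)
    (θ : (Fin k → Fin s) ≃ (Fin k → Fin s))
    (Θ : (ℕ → Fin s) → (ℕ → Fin s))
    (hΘ : ∀ (a : ℕ → Fin s) (m : ℕ) (i : Fin k),
      Θ a (k * m + (i : ℕ)) = θ (fun j => a (k * m + (j : ℕ))) i)
    (F : ℝ → ℝ)
    (hF : ∀ a : ℕ → Fin s, (¬ ∃ N, ∀ n ≥ N, (a n : ℕ) = s - 1) →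
      F (∑' n : ℕ, ((a n : ℕ) : ℝ) / (s : ℝ) ^ (n + 1)) =
        ∑' n : ℕ, ((Θ a n : ℕ) : ℝ) / (s : ℝ) ^ (n + 1)) :
    dimH {p : ℝ × ℝ | ∃ x ∈ Set.Ico (0 : ℝ) 1, p = (x, F x)} = 1 := by
  set G : Set (ℝ × ℝ) := {p : ℝ × ℝ | ∃ x ∈ Set.Ico (0 : ℝ) 1, p = (x, F x)} with hG
  have hs0 : (0:ℝ) < s := by positivity
  -- lower bound
  have hlow : (1 : ℝ≥0∞) ≤ dimH G := by
    have himg : Prod.fst '' G = Set.Ico (0:ℝ) 1 := by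
      ext z
      constructor
      · rintro ⟨p, ⟨x, hx, rfl⟩, rfl⟩
        exact hx
      · intro hz
        exact ⟨(z, F z), ⟨z, hz, rfl⟩, rfl⟩
    have h1 : dimH (Set.Ico (0:ℝ) 1) = 1 := by
      have : dimH (Set.Ico (0:ℝ) 1) = Module.finrank ℝ ℝ := by
        apply Real.dimH_of_nonempty_interior
        rw [interior_Ico]
        exact ⟨1/2, by norm_num, by norm_num⟩
      rw [this, Module.finrank_self]
      norm_num
    calc (1 : ℝ≥0∞) = dimH (Prod.fst '' G) := by rw [himg, h1]
      _ ≤ dimH G := LipschitzWith.dimH_image_le LipschitzWith.prod_fst G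
  -- upper bound
  have hup : dimH G ≤ 1 := by
    apply dimH_le
    intro d' hd'
    by_contra hgt
    push_neg at hgt
    have hd1 : (1:ℝ) < (d' : ℝ) := by exact_mod_cast hgt
    -- the covering
    set δ : ℕ → ℝ := fun m => ((1:ℝ)/s) ^ (k * m) with hδ
    have hδpos : ∀ m, 0 < δ m := fun m => by positivity
    have hδs : ∀ m, δ m * (s:ℝ)^(k*m) = 1 := by
      intro m
      rw [hδ]
      simp only [div_pow, one_pow]
      field_simp
    set t : ∀ m : ℕ, Fin (s ^ (k * m)) → Set (ℝ × ℝ) := fun m j =>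
      Set.Icc ((j:ℝ) * δ m) (((j:ℝ)+1) * δ m) ×ˢ
        Set.Icc (F ((j:ℝ) * δ m) - δ m) (F ((j:ℝ) * δ m) + δ m) with ht
    set r : ℕ → ℝ≥0∞ := fun m => ENNReal.ofReal (2 * δ m) with hrdef
    have hβ : ((1:ℝ)/s) ^ k < 1 := by
      apply pow_lt_one₀ (by positivity) (inv_s_lt_one hs) (by omega)
    have hδ0 : Filter.Tendsto δ Filter.atTop (nhds 0) := by
      have heq : δ = fun m => (((1:ℝ)/s) ^ k) ^ m := by
        funext m
        show ((1:ℝ)/s) ^ (k * m) = (((1:ℝ)/s) ^ k) ^ m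
        rw [pow_mul]
      rw [heq]
      exact tendsto_pow_atTop_nhds_zero_of_lt_one (by positivity) hβ
    have hr : Filter.Tendsto r Filter.atTop (nhds 0) := by
      have h2 : Filter.Tendsto (fun m => 2 * δ m) Filter.atTop (nhds (2 * 0)) :=
        hδ0.const_mul 2
      rw [mul_zero] at h2
      have h3 := ENNReal.tendsto_ofReal h2
      rw [ENNReal.ofReal_zero] at h3
      exact h3
    have htd : ∀ m : ℕ, ∀ j, EMetric.diam (t m j) ≤ r m := by
      intro m j
      apply EMetric.diam_le
      rintro p ⟨hp1, hp2⟩ q ⟨hq1, hq2⟩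
      rw [Prod.edist_eq]
      apply max_le
      · refine (EMetric.edist_le_diam_of_mem hp1 hq1).trans ?_
        rw [Real.ediam_Icc]
        apply ENNReal.ofReal_le_ofReal
        nlinarith [hδpos m]
      · refine (EMetric.edist_le_diam_of_mem hp2 hq2).trans ?_
        rw [Real.ediam_Icc]
        apply ENNReal.ofReal_le_ofReal
        nlinarith [hδpos m]
    have hst : ∀ m : ℕ, G ⊆ ⋃ j, t m j := by
      intro m
      rintro p ⟨x, hx, rfl⟩
      have hpow : (0:ℝ) < (s:ℝ)^(k*m) := by positivity
      set jz : ℤ := ⌊(s:ℝ)^(k*m) * x⌋ with hjz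
      have hjznn : 0 ≤ jz := Int.floor_nonneg.2 (by nlinarith [hx.1])
      have hjlt : jz < (s ^ (k*m) : ℕ) := by
        rw [hjz, Int.floor_lt]
        push_cast
        nlinarith [hx.2]
      have hjlt' : jz.toNat < s ^ (k*m) := by omega
      have hcast : ((⟨jz.toNat, hjlt'⟩ : Fin (s ^ (k*m))) : ℝ) = (jz : ℝ) := by
        simp only [Fin.val_mk]
        exact_mod_cast Int.toNat_of_nonneg hjznn
      have h1 : (jz:ℝ) ≤ (s:ℝ)^(k*m) * x := Int.floor_le _
      have h2 : (s:ℝ)^(k*m) * x < (jz:ℝ) + 1 := Int.lt_floor_add_one _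
      have hδsm := hδs m
      refine Set.mem_iUnion.2 ⟨⟨jz.toNat, hjlt'⟩, ?_, ?_⟩
      · -- x ∈ Icc
        rw [hcast]
        constructor
        · nlinarith [hδpos m]
        · nlinarith [hδpos m]
      · rw [hcast]
        have hy01 : (jz:ℝ) * δ m ∈ Set.Ico (0:ℝ) 1 := by
          constructor
          · have hz : (0:ℝ) ≤ (jz:ℝ) := by exact_mod_cast hjznn
            positivity
          · have hj1 : (jz:ℝ) + 1 ≤ ((s ^ (k*m) : ℕ) : ℝ) := by exact_mod_cast hjlt
            push_cast at hj1
            nlinarith [hδpos m]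
        have hfleq : ⌊(s:ℝ)^(k*m) * ((jz:ℝ) * δ m)⌋ = ⌊(s:ℝ)^(k*m) * x⌋ := by
          have heq2 : (s:ℝ)^(k*m) * ((jz:ℝ) * δ m) = (jz:ℝ) := by nlinarith
          rw [heq2, Int.floor_intCast, ← hjz]
        have hkey := key_estimate hs hk θ Θ hΘ F hF hx hy01 m hfleq.symm
        rw [abs_le] at hkey
        have hδeq : ((1:ℝ)/s) ^ (k * m) = δ m := rfl
        rw [hδeq] at hkey
        exact ⟨by linarith [hkey.2], by linarith [hkey.1]⟩
    have hμ := MeasureTheory.Measure.hausdorffMeasure_le_liminf_sum ((d' : NNReal) : ℝ) G r hr t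
      (Filter.Eventually.of_forall htd) (Filter.Eventually.of_forall hst)
    set g : ℕ → ℝ≥0∞ := fun m =>
      (s ^ (k*m) : ℝ≥0∞) * (ENNReal.ofReal (2 * δ m)) ^ ((d' : NNReal) : ℝ) with hg
    have hsum_le : ∀ m, ∑ j, EMetric.diam (t m j) ^ ((d' : NNReal) : ℝ) ≤ g m := by
      intro m
      calc ∑ j, EMetric.diam (t m j) ^ ((d' : NNReal) : ℝ)
          ≤ ∑ _j : Fin (s ^ (k*m)), (ENNReal.ofReal (2 * δ m)) ^ ((d' : NNReal) : ℝ) := by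
            refine Finset.sum_le_sum (fun j _ => ?_)
            exact ENNReal.rpow_le_rpow (htd m j) (by positivity)
        _ = g m := by
            rw [Finset.sum_const, Finset.card_univ, Fintype.card_fin, nsmul_eq_mul, hg]
            push_cast
            ring
    set c : ℕ → ℝ := fun m => (s:ℝ)^(k*m) * (2 * δ m) ^ ((d' : NNReal) : ℝ) with hc
    have hgc : ∀ m, g m = ENNReal.ofReal (c m) := by
      intro m
      show (s:ℝ≥0∞) ^ (k*m) * (ENNReal.ofReal (2 * δ m)) ^ ((d' : NNReal) : ℝ)
          = ENNReal.ofReal ((s:ℝ)^(k*m) * (2 * δ m) ^ ((d' : NNReal) : ℝ))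
      have hrw : ENNReal.ofReal ((2*δ m) ^ ((d' : NNReal) : ℝ))
          = ENNReal.ofReal (2*δ m) ^ ((d' : NNReal) : ℝ) :=
        (ENNReal.ofReal_rpow_of_pos (show (0:ℝ) < 2 * δ m by positivity)).symm
      conv_rhs => rw [ENNReal.ofReal_mul (by positivity)]
      conv_rhs => rw [ENNReal.ofReal_pow (by positivity)]
      rw [hrw]
      norm_cast
    have hc0 : Filter.Tendsto c Filter.atTop (nhds 0) := by
      have hB1 : 1 < (s:ℝ)^k := by
        have h5 : 1 < s ^ k := Nat.one_lt_pow (by omega) (by omega)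
        exact_mod_cast h5
      have haux := aux_tendsto hB1 hd1
      have heq : c = fun m : ℕ => ((s:ℝ)^k) ^ m * (2 * (((s:ℝ)^k)⁻¹) ^ m) ^ ((d' : NNReal) : ℝ) := by
        funext m
        rw [hc]
        simp only
        have e1 : (s:ℝ)^(k*m) = ((s:ℝ)^k)^m := by rw [pow_mul]
        have e2 : δ m = (((s:ℝ)^k)⁻¹)^m := by
          show ((1:ℝ)/s) ^ (k*m) = _
          rw [pow_mul]
          congr 1
          rw [div_pow, one_pow, inv_eq_one_div]
        rw [e1, e2]
      rw [heq]
      exact haux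
    have hg0 : Filter.Tendsto g Filter.atTop (nhds 0) := by
      have heq : g = fun m => ENNReal.ofReal (c m) := funext hgc
      rw [heq]
      have h4 := ENNReal.tendsto_ofReal hc0
      simpa using h4
    have hliminf : Filter.liminf (fun m => ∑ j, EMetric.diam (t m j) ^ ((d' : NNReal) : ℝ))
        Filter.atTop ≤ 0 := by
      rw [← hg0.liminf_eq]
      exact Filter.liminf_le_liminf (Filter.Eventually.of_forall hsum_le)
    have hzero := le_antisymm (hμ.trans hliminf) zero_le
    rw [hd'] at hzero
    exact (ENNReal.top_ne_zero hzero).elim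
  exact le_antisymm hup hlow
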